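/- Under the hypotheses of the Laurent expansion of [I − (T̄ − εD)]^{-1} (irreducible stochastic T̄ with stationary distribution π̄, deviation matrix H, π̄ D 1 ≠ 0), the limit of [I − (T̄ − εD)]^{-1} − (1/ε)·(1/(π̄ D 1)) 1π̄ as ε → 0⁺ equals X₀ = (I − X_{−1}D) H (I − D X_{−1}), where X_{−1} = (1/(π̄ D 1)) 1π̄. -/

import Mathlib

open Matrix BigOperators Filter Topology

private lemma stmt12_pow_nonneg {n : Type*} [Fintype n] [DecidableEq n] (T : Matrix n n ℝ)
    (h0 : ∀ i j, 0 ≤ T i j) (k : ℕ) : ∀ i j, 0 ≤ (T ^ k) i j := by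
  induction k with
  | zero =>
      intro i j
      rw [pow_zero]
      by_cases h : i = j <;> simp [Matrix.one_apply, h]
  | succ k ih =>
      intro i j
      rw [pow_succ, Matrix.mul_apply]
      exact Finset.sum_nonneg fun l _ => mul_nonneg (ih i l) (h0 l j)

private lemma stmt12_pow_rowsum {n : Type*} [Fintype n] [DecidableEq n] (T : Matrix n n ℝ)
    (h1 : ∀ i, ∑ j, T i j = 1) (k : ℕ) : ∀ i, ∑ j, (T ^ k) i j = 1 := by
  induction k with
  | zero => intro i; simp [Matrix.one_apply]
  | succ k ih =>
      intro i
      rw [pow_succ]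
      simp only [Matrix.mul_apply]
      rw [Finset.sum_comm]
      calc ∑ l, ∑ j, (T ^ k) i l * T l j = ∑ l, (T ^ k) i l * ∑ j, T l j := by
            simp [Finset.mul_sum]
        _ = 1 := by simp [h1, ih i]

private lemma stmt12_fixed_const {n : Type*} [Fintype n] [DecidableEq n] [Nonempty n]
    (T : Matrix n n ℝ)
    (h0 : ∀ i j, 0 ≤ T i j) (h1 : ∀ i, ∑ j, T i j = 1)
    (hirr : ∀ i j, ∃ k, 0 < k ∧ 0 < (T ^ k) i j)
    (v : n → ℝ) (hv : T *ᵥ v = v) : ∀ i j, v i = v j := by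
  obtain ⟨i₀, -, hmax⟩ := Finset.exists_max_image Finset.univ v
    ⟨Classical.arbitrary n, Finset.mem_univ _⟩
  have hpowv : ∀ m, (T ^ m) *ᵥ v = v := by
    intro m
    induction m with
    | zero => simp
    | succ m ih => rw [pow_succ, ← Matrix.mulVec_mulVec, hv, ih]
  have key : ∀ j, v j = v i₀ := by
    intro j
    obtain ⟨k, -, hkpos⟩ := hirr i₀ j
    have h2 : ∑ l, (T ^ k) i₀ l * v l = v i₀ := by
      have := congrFun (hpowv k) i₀
      simpa [Matrix.mulVec, dotProduct] using this
    have hsum : ∑ l, (T ^ k) i₀ l * (v i₀ - v l) = 0 := by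
      have h3 : ∑ l, (T ^ k) i₀ l * (v i₀ - v l)
          = (∑ l, (T ^ k) i₀ l) * v i₀ - ∑ l, (T ^ k) i₀ l * v l := by
        rw [Finset.sum_mul, ← Finset.sum_sub_distrib]
        exact Finset.sum_congr rfl fun l _ => by ring
      rw [h3, stmt12_pow_rowsum T h1 k i₀, h2, one_mul, sub_self]
    have hterm : (T ^ k) i₀ j * (v i₀ - v j) = 0 := by
      have hnn : ∀ l ∈ Finset.univ, 0 ≤ (T ^ k) i₀ l * (v i₀ - v l) := fun l _ =>
        mul_nonneg (stmt12_pow_nonneg T h0 k i₀ l)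
          (sub_nonneg.mpr (hmax l (Finset.mem_univ l)))
      exact (Finset.sum_eq_zero_iff_of_nonneg hnn).mp hsum j (Finset.mem_univ j)
    rcases mul_eq_zero.mp hterm with h | h
    · exact absurd h (ne_of_gt hkpos)
    · linarith [sub_eq_zero.mp h]
  intro i j; rw [key i, key j]

/-- `[I - (T̄ - εD)]⁻¹ - (1/ε) X₋₁ → X₀ = (I - X₋₁D)H(I - DX₋₁)` as `ε → 0⁺`. -/
theorem stmt12 {n : Type*} [Fintype n] [DecidableEq n] [Nonempty n]
    (Tbar : Matrix n n ℝ)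
    (hnonneg : ∀ i j, 0 ≤ Tbar i j)
    (hstoch : ∀ i, ∑ j, Tbar i j = 1)
    (hirr : ∀ i j, ∃ k, 0 < k ∧ 0 < (Tbar ^ k) i j)
    (pibar : n → ℝ)
    (hstat : pibar ᵥ* Tbar = pibar)
    (hnorm : ∑ i, pibar i = 1)
    (H : Matrix n n ℝ)
    (hH : H = (1 - Tbar + Matrix.of (fun _ j => pibar j))⁻¹
        - Matrix.of (fun _ j => pibar j))
    (D : Matrix n n ℝ)
    (hD : ∑ i, (pibar ᵥ* D) i ≠ 0)
    (hsub : ∃ ε₀ > (0 : ℝ), ∀ ε : ℝ, 0 < ε → ε < ε₀ →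
      (∀ i j, 0 ≤ (Tbar - ε • D) i j) ∧
      (∀ i, ∑ j, (Tbar - ε • D) i j ≤ 1) ∧
      (∀ μ ∈ spectrum ℂ ((Tbar - ε • D).map (Complex.ofReal ·)),
        ‖μ‖ < 1))
    (Xm1 : Matrix n n ℝ)
    (hXm1 : Xm1 = (1 / ∑ i, (pibar ᵥ* D) i) • Matrix.of (fun _ j => pibar j)) :
    Tendsto (fun ε : ℝ => (1 - (Tbar - ε • D))⁻¹ - ε⁻¹ • Xm1)
      (𝓝[>] (0 : ℝ))
      (𝓝 ((1 - Xm1 * D) * H * (1 - D * Xm1))) := by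
  classical
  set P : Matrix n n ℝ := Matrix.of (fun _ j => pibar j) with hP
  set c : ℝ := ∑ i, (pibar ᵥ* D) i with hc
  set B : Matrix n n ℝ := 1 - Tbar + P with hB
  -- basic identities
  have hTP : Tbar * P = P := by
    ext i j
    simp only [Matrix.mul_apply, hP, Matrix.of_apply]
    rw [← Finset.sum_mul, hstoch i, one_mul]
  have hPT : P * Tbar = P := by
    ext i j
    have := congrFun hstat j
    simp only [Matrix.vecMul, dotProduct] at this
    simpa [Matrix.mul_apply, hP] using this
  have hPP : P * P = P := by
    ext i j
    simp only [Matrix.mul_apply, hP, Matrix.of_apply]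
    rw [← Finset.sum_mul, hnorm, one_mul]
  have hPDP : P * D * P = c • P := by
    ext i j
    simp only [Matrix.mul_apply, hP, Matrix.of_apply, Matrix.smul_apply, smul_eq_mul, hc]
    rw [← Finset.sum_mul]
    simp [Matrix.vecMul, dotProduct]
  have hBP : B * P = P := by
    rw [hB, Matrix.add_mul, Matrix.sub_mul, Matrix.one_mul, hTP, hPP]
    abel
  have hPB : P * B = P := by
    rw [hB, Matrix.mul_add, Matrix.mul_sub, Matrix.mul_one, hPT, hPP]
    abel
  have hpiP : pibar ᵥ* P = pibar := by
    ext j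
    simp only [Matrix.vecMul, dotProduct, hP, Matrix.of_apply]
    rw [← Finset.sum_mul, hnorm, one_mul]
  -- invertibility of B
  have hdetB : IsUnit B.det := by
    rw [isUnit_iff_ne_zero]
    intro hdet
    obtain ⟨v, hv0, hvB⟩ := Matrix.exists_mulVec_eq_zero_iff.mpr hdet
    have hpiB : pibar ᵥ* B = pibar := by
      rw [hB, Matrix.vecMul_add, Matrix.vecMul_sub, Matrix.vecMul_one, hstat, hpiP]
      abel
    have hs : pibar ⬝ᵥ v = 0 := by
      have : pibar ⬝ᵥ (B *ᵥ v) = 0 := by rw [hvB, dotProduct_zero]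
      rwa [Matrix.dotProduct_mulVec, hpiB] at this
    have hPv : P *ᵥ v = 0 := by
      ext i
      simpa [Matrix.mulVec, dotProduct, hP] using hs
    have hTv : Tbar *ᵥ v = v := by
      have hexp : v - Tbar *ᵥ v + P *ᵥ v = 0 := by
        have : B *ᵥ v = v - Tbar *ᵥ v + P *ᵥ v := by
          rw [hB, Matrix.add_mulVec, Matrix.sub_mulVec, Matrix.one_mulVec]
        rw [← this, hvB]
      rw [hPv, add_zero, sub_eq_zero] at hexp
      exact hexp.symm
    have hconst := stmt12_fixed_const Tbar hnonneg hstoch hirr v hTv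
    set i₀ := Classical.arbitrary n with hi₀
    have hvi : ∀ i, v i = v i₀ := fun i => hconst i i₀
    have : v i₀ = 0 := by
      have : ∑ i, pibar i * v i = 0 := by simpa [dotProduct] using hs
      calc v i₀ = ∑ i, pibar i * v i := by
            rw [Finset.sum_congr rfl fun i _ => by rw [hvi i], ← Finset.sum_mul, hnorm, one_mul]
        _ = 0 := this
    exact hv0 (funext fun i => by rw [hvi i, this]; rfl)
  have hcne : c ≠ 0 := hD
  -- deviation matrix identities
  have hPBi : P * B⁻¹ = P := by
    conv_lhs => rw [← hPB]
    exact Matrix.mul_nonsing_inv_cancel_right B P hdetB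
  have hBiP : B⁻¹ * P = P := by
    conv_lhs => rw [← hBP]
    exact Matrix.nonsing_inv_mul_cancel_left B P hdetB
  have hPH : P * H = 0 := by rw [hH, Matrix.mul_sub, hPBi, hPP, sub_self]
  have hHP : H * P = 0 := by rw [hH, Matrix.sub_mul, hBiP, hPP, sub_self]
  have hBH : B * H = 1 - P := by
    rw [hH, Matrix.mul_sub, Matrix.mul_nonsing_inv B hdetB, hBP]
  have h1T : (1 : Matrix n n ℝ) - Tbar = B - P := by rw [hB]; abel
  have h1TH : (1 - Tbar) * H = 1 - P := by
    rw [h1T, Matrix.sub_mul, hBH, hPH, sub_zero]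
  have h1TP : (1 - Tbar) * P = 0 := by
    rw [h1T, Matrix.sub_mul, hBP, hPP, sub_self]
  -- Xm1 identities
  have h1TXm1 : (1 - Tbar) * Xm1 = 0 := by
    rw [hXm1, Matrix.mul_smul, h1TP, smul_zero]
  have hPDXm1 : P * D * Xm1 = P := by
    rw [hXm1, Matrix.mul_smul, hPDP, smul_smul, one_div, inv_mul_cancel₀ hcne, one_smul]
  have hXm1DXm1 : Xm1 * D * Xm1 = Xm1 := by
    nth_rewrite 1 [hXm1]
    rw [Matrix.smul_mul, Matrix.smul_mul, hPDXm1, ← hXm1]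
  set X0 : Matrix n n ℝ := (1 - Xm1 * D) * H * (1 - D * Xm1) with hX0
  set R : Matrix n n ℝ := D * X0 with hR
  have e1 : Xm1 * D * (1 - Xm1 * D) = 0 := by
    rw [Matrix.mul_sub, Matrix.mul_one, ← Matrix.mul_assoc, hXm1DXm1, sub_self]
  have hXm1R : Xm1 * R = 0 := by
    have step : Xm1 * R = Xm1 * D * (1 - Xm1 * D) * (H * (1 - D * Xm1)) := by
      rw [hR, hX0]
      simp only [Matrix.mul_assoc]
    rw [step, e1, Matrix.zero_mul]
  -- key algebraic identities in ε
  have hAdecomp : ∀ ε : ℝ, (1 : Matrix n n ℝ) - (Tbar - ε • D) = (1 - Tbar) + ε • D := by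
    intro ε; ext i j
    simp [Matrix.sub_apply, Matrix.add_apply, Matrix.smul_apply]
    ring
  have hAXm1 : ∀ ε : ℝ, (1 - (Tbar - ε • D)) * Xm1 = ε • (D * Xm1) := by
    intro ε
    rw [hAdecomp ε, Matrix.add_mul, h1TXm1, zero_add, Matrix.smul_mul]
  have h1TX0 : (1 - Tbar) * X0 = 1 - D * Xm1 := by
    have hstep1 : (1 - Tbar) * (1 - Xm1 * D) = 1 - Tbar := by
      rw [Matrix.mul_sub, Matrix.mul_one, ← Matrix.mul_assoc, h1TXm1, Matrix.zero_mul,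
        sub_zero]
    have hstep2 : P * (1 - D * Xm1) = 0 := by
      rw [Matrix.mul_sub, Matrix.mul_one, ← Matrix.mul_assoc, hPDXm1, sub_self]
    calc (1 - Tbar) * X0
        = ((1 - Tbar) * (1 - Xm1 * D)) * H * (1 - D * Xm1) := by
          rw [hX0]; simp only [Matrix.mul_assoc]
      _ = ((1 : Matrix n n ℝ) - P) * (1 - D * Xm1) := by rw [hstep1, h1TH]
      _ = 1 - D * Xm1 := by
          rw [Matrix.sub_mul, Matrix.one_mul, hstep2, sub_zero]
  have hAX0 : ∀ ε : ℝ, (1 - (Tbar - ε • D)) * X0 = (1 - D * Xm1) + ε • R := by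
    intro ε
    rw [hAdecomp ε, Matrix.add_mul, h1TX0, Matrix.smul_mul, hR]
  have hAU : ∀ ε : ℝ, ε ≠ 0 →
      (1 - (Tbar - ε • D)) * (ε⁻¹ • Xm1 + X0) = 1 + ε • R := by
    intro ε hε
    rw [Matrix.mul_add, Matrix.mul_smul, hAXm1 ε, hAX0 ε, smul_smul,
      inv_mul_cancel₀ hε, one_smul]
    abel
  -- continuity
  have h1cont : Continuous (fun ε : ℝ => (1 : Matrix n n ℝ) + ε • R) :=
    continuous_const.add (continuous_id.smul continuous_const)
  have h1inv : ((1 : Matrix n n ℝ))⁻¹ = 1 :=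
    Matrix.inv_eq_right_inv (by rw [Matrix.mul_one])
  have hf1 : Tendsto (fun ε : ℝ => (1 : Matrix n n ℝ) + ε • R) (𝓝 0) (𝓝 1) := by
    simpa [ContinuousAt] using h1cont.continuousAt (x := (0 : ℝ))
  have hginv : Tendsto (fun ε : ℝ => ((1 : Matrix n n ℝ) + ε • R)⁻¹) (𝓝 0) (𝓝 1) := by
    have h2 : ContinuousAt Inv.inv ((1 : Matrix n n ℝ)) := by
      apply continuousAt_matrix_inv
      rw [Matrix.det_one, Ring.inverse_eq_inv']
      exact continuousAt_inv₀ one_ne_zero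
    have h3 := h2.tendsto.comp hf1
    simpa [Function.comp_def, h1inv] using h3
  have hF : Tendsto (fun ε : ℝ => X0 * (1 + ε • R)⁻¹) (𝓝[>] (0 : ℝ)) (𝓝 X0) := by
    have hmul : Continuous (fun M : Matrix n n ℝ => X0 * M) :=
      Continuous.matrix_mul continuous_const continuous_id
    have h4 := (hmul.continuousAt (x := (1 : Matrix n n ℝ))).tendsto.comp hginv
    simpa [Function.comp_def] using h4.mono_left nhdsWithin_le_nhds
  -- eventual equality
  have hdetcont : ContinuousAt (fun ε : ℝ => ((1 : Matrix n n ℝ) + ε • R).det) 0 :=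
    (h1cont.matrix_det).continuousAt
  have hevdet : ∀ᶠ ε in 𝓝 (0 : ℝ), ((1 : Matrix n n ℝ) + ε • R).det ≠ 0 := by
    apply hdetcont.eventually_ne
    simp
  have hev : ∀ᶠ ε in 𝓝[>] (0 : ℝ),
      X0 * (1 + ε • R)⁻¹ = (1 - (Tbar - ε • D))⁻¹ - ε⁻¹ • Xm1 := by
    filter_upwards [eventually_nhdsWithin_of_eventually_nhds hevdet,
      self_mem_nhdsWithin] with ε hdet hεpos
    have hdet' : IsUnit ((1 : Matrix n n ℝ) + ε • R).det := isUnit_iff_ne_zero.mpr hdet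
    have hεne : ε ≠ 0 := ne_of_gt hεpos
    have hright : (1 - (Tbar - ε • D)) * ((ε⁻¹ • Xm1 + X0) * (1 + ε • R)⁻¹) = 1 := by
      rw [← Matrix.mul_assoc, hAU ε hεne, Matrix.mul_nonsing_inv _ hdet']
    have hinv : (1 - (Tbar - ε • D))⁻¹ = (ε⁻¹ • Xm1 + X0) * (1 + ε • R)⁻¹ :=
      Matrix.inv_eq_right_inv hright
    have hXm1inv : Xm1 * (1 + ε • R)⁻¹ = Xm1 := by
      have hfix : Xm1 * (1 + ε • R) = Xm1 := by
        rw [Matrix.mul_add, Matrix.mul_one, Matrix.mul_smul, hXm1R, smul_zero, add_zero]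
      conv_lhs => rw [← hfix]
      exact Matrix.mul_nonsing_inv_cancel_right _ Xm1 hdet'
    rw [hinv, Matrix.add_mul, Matrix.smul_mul, hXm1inv]
    abel
  exact hF.congr' hev
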